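/- Let a, b ∈ 𝕋 and z = (z↑, z↓) ∈ 𝕋⁶ be unbiased to all six columns of F^T(a,b) (i.e. |⟨z, b_k⟩|² = 6 for k = 1,…,6). Set s_j = |⟨z↑, f_j⟩|² for j = 0,1,2, where f₀=(1,1,1), f₁=(1,ω,ω̄), f₂=(1,ω̄,ω). Then |⟨z↓, f_j⟩|² = 6 − s_j for each j, and K(z) = (s₀² + s₁² + s₂² − 54)/486, where K(z) = (1/486)·∑_{j=0}^{2}(⟨z↑, f_j⟩·⟨c_j f_j, z↓⟩)² with (c₀,c₁,c₂)=(1,a,b). In particular K(z) is real. -/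

import Mathlib

open Finset

noncomputable def omega3 : ℂ := Complex.exp (2 * Real.pi * Complex.I / 3)

noncomputable def fvec : Fin 3 → Fin 3 → ℂ :=
  ![![1, 1, 1], ![1, omega3, (starRingEnd ℂ) omega3], ![1, (starRingEnd ℂ) omega3, omega3]]

/-- The parameters `(c₀,c₁,c₂) = (1,a,b)`. -/
noncomputable def cpar (a b : ℂ) : Fin 3 → ℂ := ![1, a, b]

/-- The columns of `F^T(a,b)`: `(f_j, ±c_j f_j)` for `j = 0,1,2`. -/
noncomputable def FTcol (a b : ℂ) (j : Fin 3) (ε : Bool) : Fin 6 → ℂ :=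
  Fin.append (fvec j) (fun i => (if ε then 1 else -1) * cpar a b j * fvec j i)

/-- The second witness function
`K(z) = (1/486)·∑_j (⟨z↑,f_j⟩·⟨c_j f_j, z↓⟩)²`. -/
noncomputable def Kfun (a b : ℂ) (zu zd : Fin 3 → ℂ) : ℂ :=
  (1 / 486) * ∑ j : Fin 3,
    ((∑ i : Fin 3, zu i * (starRingEnd ℂ) (fvec j i)) *
      (∑ i : Fin 3, cpar a b j * fvec j i * (starRingEnd ℂ) (zd i))) ^ 2

lemma omega3_prim : IsPrimitiveRoot omega3 3 := by
  have := Complex.isPrimitiveRoot_exp 3 (by norm_num)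
  convert this using 2
  rw [omega3]; norm_num

lemma omega3_rel : omega3 ^ 2 + omega3 + 1 = 0 := by
  have h := omega3_prim.geom_sum_eq_zero (by norm_num)
  simp [Finset.sum_range_succ] at h
  linear_combination h

lemma omega3_cube : omega3 ^ 3 = 1 := omega3_prim.pow_eq_one

lemma omega3_conj : (starRingEnd ℂ) omega3 = -1 - omega3 := by
  have habs : ‖omega3‖ = 1 := by
    rw [omega3, Complex.norm_exp]
    norm_num [Complex.div_re, Complex.mul_re, Complex.mul_im]
  have h : omega3 * (starRingEnd ℂ) omega3 = 1 := by
    rw [Complex.mul_conj]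
    norm_cast
    rw [← Complex.sq_norm, habs]; norm_num
  have h2 : (starRingEnd ℂ) omega3 = omega3 ^ 2 := by
    have h3 : (starRingEnd ℂ) omega3 * omega3 ^ 3 = omega3 ^ 2 := by
      linear_combination omega3 ^ 2 * h
    rw [omega3_cube, mul_one] at h3; exact h3
  rw [h2]; linear_combination omega3_rel

open Complex in
lemma key_lemma (c u v : ℂ) (hc : Complex.normSq c = 1)
    (h1 : Complex.normSq (u + (starRingEnd ℂ) c * v) = 6)
    (h2 : Complex.normSq (u - (starRingEnd ℂ) c * v) = 6) :
    Complex.normSq v = 6 - Complex.normSq u ∧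
    (u * (c * (starRingEnd ℂ) v)) ^ 2 =
      (((Complex.normSq u) ^ 2 - 6 * Complex.normSq u : ℝ) : ℂ) := by
  set w : ℂ := (starRingEnd ℂ) c * v with hw
  have hnw : normSq w = normSq v := by
    rw [hw, normSq_mul, normSq_conj, hc, one_mul]
  have hadd : normSq (u + w) = normSq u + normSq w + 2 * (u * (starRingEnd ℂ) w).re := by
    simp [normSq_apply, Complex.add_re, Complex.add_im, Complex.mul_re, Complex.mul_im]; ring
  have hsub : normSq (u - w) = normSq u + normSq w - 2 * (u * (starRingEnd ℂ) w).re := by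
    simp [normSq_apply, Complex.sub_re, Complex.sub_im, Complex.mul_re, Complex.mul_im]; ring
  have hs : normSq u + normSq w = 6 := by
    rw [hadd] at h1; rw [hsub] at h2; linarith
  have hre : (u * (starRingEnd ℂ) w).re = 0 := by
    rw [hadd] at h1; rw [hsub] at h2; linarith
  have hv : normSq v = 6 - normSq u := by rw [← hnw]; linarith
  refine ⟨hv, ?_⟩
  have hx : u * (c * (starRingEnd ℂ) v) = u * (starRingEnd ℂ) w := by
    rw [hw, map_mul, Complex.conj_conj]
  rw [hx]
  have hsq : (u * (starRingEnd ℂ) w) ^ 2 = ((-(normSq (u * (starRingEnd ℂ) w)) : ℝ) : ℂ) := by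
    apply Complex.ext <;>
      simp [pow_two, Complex.mul_re, Complex.mul_im, normSq_apply, hre]
  rw [hsq]
  congr 1
  rw [normSq_mul, normSq_conj, hnw, hv]
  ring

lemma append_sum (zu zd f g : Fin 3 → ℂ) (c : ℂ) :
    (∑ i : Fin 6, Fin.append zu zd i * (starRingEnd ℂ) (Fin.append f (fun i => c * g i) i)) =
      (∑ i : Fin 3, zu i * (starRingEnd ℂ) (f i)) +
        (starRingEnd ℂ) c * ∑ i : Fin 3, zd i * (starRingEnd ℂ) (g i) := by
  have p0 : Fin.append zu zd (0 : Fin 6) = zu 0 := rfl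
  have p1 : Fin.append zu zd (1 : Fin 6) = zu 1 := rfl
  have p2 : Fin.append zu zd (2 : Fin 6) = zu 2 := rfl
  have p3 : Fin.append zu zd (3 : Fin 6) = zd 0 := rfl
  have p4 : Fin.append zu zd (4 : Fin 6) = zd 1 := rfl
  have p5 : Fin.append zu zd (5 : Fin 6) = zd 2 := rfl
  have q0 : Fin.append f (fun i => c * g i) (0 : Fin 6) = f 0 := rfl
  have q1 : Fin.append f (fun i => c * g i) (1 : Fin 6) = f 1 := rfl
  have q2 : Fin.append f (fun i => c * g i) (2 : Fin 6) = f 2 := rfl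
  have q3 : Fin.append f (fun i => c * g i) (3 : Fin 6) = c * g 0 := rfl
  have q4 : Fin.append f (fun i => c * g i) (4 : Fin 6) = c * g 1 := rfl
  have q5 : Fin.append f (fun i => c * g i) (5 : Fin 6) = c * g 2 := rfl
  rw [Fin.sum_univ_six, Fin.sum_univ_three, Fin.sum_univ_three,
    p0, p1, p2, p3, p4, p5, q0, q1, q2, q3, q4, q5, map_mul, map_mul, map_mul]
  ring

lemma parseval_alg (ω z0 z1 z2 c0 c1 c2 : ℂ) (hω : ω^2 + ω + 1 = 0)
    (h0 : z0*c0 = 1) (h1 : z1*c1 = 1) (h2 : z2*c2 = 1) :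
    (z0+z1+z2)*(c0+c1+c2)
    + (z0 + z1*(-1-ω) + z2*ω)*(c0 + c1*ω + c2*(-1-ω))
    + (z0 + z1*ω + z2*(-1-ω))*(c0 + c1*(-1-ω) + c2*ω) = 9 := by
  linear_combination 3*h0 + 3*h1 + 3*h2 + (-2*(z1*c1+z2*c2) + 2*(z1*c2+z2*c1))*hω

/-- If `z = (z↑,z↓) ∈ 𝕋⁶` is unbiased to all six columns of `F^T(a,b)`, then
`|⟨z↓,f_j⟩|² = 6 - s_j` with `s_j = |⟨z↑,f_j⟩|²`, and
`K(z) = (s₀²+s₁²+s₂²-54)/486`; in particular `K(z)` is real. -/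
theorem Kfun_eq_of_unbiased (a b : ℂ) (ha : ‖a‖ = 1) (hb : ‖b‖ = 1)
    (zu zd : Fin 3 → ℂ)
    (hzu : ∀ i : Fin 3, ‖zu i‖ = 1) (hzd : ∀ i : Fin 3, ‖zd i‖ = 1)
    (hunb : ∀ (j : Fin 3) (ε : Bool),
      Complex.normSq (∑ i : Fin 6, Fin.append zu zd i * (starRingEnd ℂ) (FTcol a b j ε i)) = 6) :
    (∀ j : Fin 3,
      Complex.normSq (∑ i : Fin 3, zd i * (starRingEnd ℂ) (fvec j i)) =
        6 - Complex.normSq (∑ i : Fin 3, zu i * (starRingEnd ℂ) (fvec j i))) ∧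
    Kfun a b zu zd =
      ((((∑ j : Fin 3,
          (Complex.normSq (∑ i : Fin 3, zu i * (starRingEnd ℂ) (fvec j i))) ^ 2) - 54) / 486
        : ℝ) : ℂ) := by
  set U : Fin 3 → ℂ := fun j => ∑ i : Fin 3, zu i * (starRingEnd ℂ) (fvec j i) with hUdef
  set V : Fin 3 → ℂ := fun j => ∑ i : Fin 3, zd i * (starRingEnd ℂ) (fvec j i) with hVdef
  have hsplit : ∀ (j : Fin 3) (ε : Bool),
      (∑ i : Fin 6, Fin.append zu zd i * (starRingEnd ℂ) (FTcol a b j ε i)) =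
        U j + (if ε then 1 else -1) * (starRingEnd ℂ) (cpar a b j) * V j := by
    intro j ε
    rw [FTcol, append_sum, map_mul]
    cases ε <;> simp [hUdef, hVdef] <;> ring
  have hc : ∀ j : Fin 3, Complex.normSq (cpar a b j) = 1 := by
    intro j
    fin_cases j <;> simp [cpar, Complex.normSq_eq_norm_sq, ha, hb]
  have hKey : ∀ j : Fin 3, Complex.normSq (V j) = 6 - Complex.normSq (U j) ∧
      (U j * (cpar a b j * (starRingEnd ℂ) (V j))) ^ 2 =
        (((Complex.normSq (U j)) ^ 2 - 6 * Complex.normSq (U j) : ℝ) : ℂ) := by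
    intro j
    apply key_lemma _ _ _ (hc j)
    · have h := hunb j true; rw [hsplit j true] at h
      simpa using h
    · have h := hunb j false; rw [hsplit j false] at h
      simpa [neg_mul, one_mul, ← sub_eq_add_neg] using h
  have hz : ∀ i : Fin 3, zu i * (starRingEnd ℂ) (zu i) = 1 := by
    intro i
    rw [Complex.mul_conj]
    norm_cast
    rw [← Complex.sq_norm, hzu i]; norm_num
  have hU0 : U 0 = zu 0 + zu 1 + zu 2 := by
    simp [hUdef, Fin.sum_univ_three, fvec]
  have hU1 : U 1 = zu 0 + zu 1 * (-1 - omega3) + zu 2 * omega3 := by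
    simp [hUdef, Fin.sum_univ_three, fvec, omega3_conj, Complex.conj_conj]
  have hU2 : U 2 = zu 0 + zu 1 * omega3 + zu 2 * (-1 - omega3) := by
    simp [hUdef, Fin.sum_univ_three, fvec, omega3_conj, Complex.conj_conj]
  have hc9 : ((Complex.normSq (U 0) : ℂ)) + Complex.normSq (U 1) + Complex.normSq (U 2)
      = 9 := by
    rw [← Complex.mul_conj, ← Complex.mul_conj, ← Complex.mul_conj, hU0, hU1, hU2]
    simp only [map_add, map_mul, map_sub, map_neg, map_one, omega3_conj]
    have halg := parseval_alg omega3 (zu 0) (zu 1) (zu 2)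
      ((starRingEnd ℂ) (zu 0)) ((starRingEnd ℂ) (zu 1)) ((starRingEnd ℂ) (zu 2))
      omega3_rel (hz 0) (hz 1) (hz 2)
    linear_combination halg
  refine ⟨fun j => (hKey j).1, ?_⟩
  have hW : ∀ j : Fin 3, (∑ i : Fin 3, cpar a b j * fvec j i * (starRingEnd ℂ) (zd i)) =
      cpar a b j * (starRingEnd ℂ) (V j) := by
    intro j
    simp only [hVdef, map_sum, map_mul, Complex.conj_conj, Finset.mul_sum]
    refine Finset.sum_congr rfl fun i _ => by ring
  rw [Kfun]
  simp only [hW]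
  rw [Fin.sum_univ_three, (hKey 0).2, (hKey 1).2, (hKey 2).2, Fin.sum_univ_three]
  push_cast
  linear_combination (-1/81 : ℂ) * hc9
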